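/- Let $\psi_\varepsilon: [0,\pi] \to \mathbb{R}$ be a family of functions of the form $\psi_\varepsilon = \psi + \eta_\varepsilon$ where $\psi(\theta) = \frac{1}{4\pi}\sin\frac{\theta}{2}$ and $(\varepsilon, \theta) \mapsto \eta_\varepsilon(\theta)$ is $C^2$ with $\eta_0 = 0$, and suppose $\psi_\varepsilon'(\pi) = 0$ for all $\varepsilon$. Then for all sufficiently small $\varepsilon > 0$, $\psi_\varepsilon'(\theta) > 0$ for all $0 \le \theta < \pi$, i.e., $\psi_\varepsilon$ is strictly increasing on $[0,\pi]$. -/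

import Mathlib

open Set Real

noncomputable section
def psiFun (θ : ℝ) : ℝ := (1 / (4 * π)) * Real.sin (θ / 2)

lemma psiFun_hasDerivAt (θ : ℝ) :
    HasDerivAt psiFun ((1 / (8 * π)) * Real.cos (θ / 2)) θ := by
  have h : HasDerivAt (fun t : ℝ => t / 2) (1 / 2) θ := (hasDerivAt_id θ).div_const 2
  have h2 := ((Real.hasDerivAt_sin (θ / 2)).comp θ h).const_mul (1 / (4 * π))
  exact h2.congr_deriv (by ring)

lemma psiDeriv_hasDerivAt (θ : ℝ) :
    HasDerivAt (fun t => (1 / (8 * π)) * Real.cos (t / 2))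
      (-((1 / (16 * π)) * Real.sin (θ / 2))) θ := by
  have h : HasDerivAt (fun t : ℝ => t / 2) (1 / 2) θ := (hasDerivAt_id θ).div_const 2
  have h2 := ((Real.hasDerivAt_cos (θ / 2)).comp θ h).const_mul (1 / (8 * π))
  exact h2.congr_deriv (by ring)

/-- If `ψ_ε = ψ + η_ε` with `(ε, θ) ↦ η_ε(θ)` of class `C²`, `η_0 = 0`, and
`ψ_ε'(π) = 0` for all `ε`, then for all sufficiently small `ε > 0` the function `ψ_ε`
satisfies `ψ_ε'(θ) > 0` on `[0, π)` and is strictly increasing on `[0, π]`. -/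
theorem stmt_14 (η : ℝ → ℝ → ℝ)
    (hη : ContDiffOn ℝ 2 (fun p : ℝ × ℝ => η p.1 p.2) (univ ×ˢ Icc 0 π))
    (hη0 : ∀ θ ∈ Icc (0 : ℝ) π, η 0 θ = 0)
    (hd : ∀ ε : ℝ, derivWithin (fun θ => psiFun θ + η ε θ) (Icc 0 π) π = 0) :
    ∃ ε₀ > 0, ∀ ε : ℝ, 0 < ε → ε < ε₀ →
      (∀ θ ∈ Ico (0 : ℝ) π,
        0 < derivWithin (fun θ' => psiFun θ' + η ε θ') (Icc 0 π) θ) ∧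
      StrictMonoOn (fun θ => psiFun θ + η ε θ) (Icc 0 π) := by
  set s : Set (ℝ × ℝ) := univ ×ˢ Icc 0 π with hs_def
  have hus : UniqueDiffOn ℝ s := uniqueDiffOn_univ.prod (uniqueDiffOn_Icc pi_pos)
  have huI : UniqueDiffOn ℝ (Icc (0:ℝ) π) := uniqueDiffOn_Icc pi_pos
  set F : ℝ × ℝ → ℝ := fun p => psiFun p.2 + η p.1 p.2 with hF_def
  have hF : ContDiffOn ℝ 2 F s := by
    have h1 : ContDiff ℝ 2 (fun p : ℝ × ℝ => psiFun p.2) := by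
      have : ContDiff ℝ 2 psiFun := by
        unfold psiFun
        exact contDiff_const.mul ((Real.contDiff_sin).comp (contDiff_id.div_const 2))
      exact this.comp contDiff_snd
    exact (h1.contDiffOn).add hη
  have hF1 : ContDiffOn ℝ 1 (fun p => fderivWithin ℝ F s p) s :=
    hF.fderivWithin hus (by norm_num)
  set G : ℝ × ℝ → ℝ := fun p => fderivWithin ℝ F s p (0, 1) with hG_def
  have hG : ContDiffOn ℝ 1 G s := hF1.clm_apply contDiffOn_const
  set H : ℝ × ℝ → ℝ := fun p => fderivWithin ℝ G s p (0, 1) with hH_def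
  have hHcont : ContinuousOn H s := by
    have := (hG.fderivWithin (m := 0) hus (by norm_num)).clm_apply
      (contDiffOn_const (c := ((0:ℝ),(1:ℝ))))
    exact (contDiffOn_zero.mp this)
  -- slice derivatives
  have hslice : ∀ (ε θ : ℝ), θ ∈ Icc (0:ℝ) π →
      HasDerivWithinAt (fun t => F (ε, t)) (G (ε, θ)) (Icc 0 π) θ := by
    intro ε θ hθ
    have hmem : (ε, θ) ∈ s := ⟨mem_univ _, hθ⟩
    have hdF : HasFDerivWithinAt F (fderivWithin ℝ F s (ε, θ)) s (ε, θ) :=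
      (hF.differentiableOn (by norm_num) _ hmem).hasFDerivWithinAt
    have hj : HasDerivWithinAt (fun t : ℝ => ((ε : ℝ), t)) ((0:ℝ), (1:ℝ)) (Icc 0 π) θ :=
      ((hasDerivAt_const θ ε).prodMk (hasDerivAt_id θ)).hasDerivWithinAt
    exact hdF.comp_hasDerivWithinAt θ hj (fun t ht => ⟨mem_univ _, ht⟩)
  have hsliceG : ∀ (ε θ : ℝ), θ ∈ Icc (0:ℝ) π →
      HasDerivWithinAt (fun t => G (ε, t)) (H (ε, θ)) (Icc 0 π) θ := by
    intro ε θ hθ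
    have hmem : (ε, θ) ∈ s := ⟨mem_univ _, hθ⟩
    have hdG : HasFDerivWithinAt G (fderivWithin ℝ G s (ε, θ)) s (ε, θ) :=
      (hG.differentiableOn one_ne_zero _ hmem).hasFDerivWithinAt
    have hj : HasDerivWithinAt (fun t : ℝ => ((ε : ℝ), t)) ((0:ℝ), (1:ℝ)) (Icc 0 π) θ :=
      ((hasDerivAt_const θ ε).prodMk (hasDerivAt_id θ)).hasDerivWithinAt
    exact hdG.comp_hasDerivWithinAt θ hj (fun t ht => ⟨mem_univ _, ht⟩)
  have hπIcc : π ∈ Icc (0:ℝ) π := right_mem_Icc.mpr pi_pos.le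
  -- identification of derivWithin with G
  have hderiv : ∀ (ε θ : ℝ), θ ∈ Icc (0:ℝ) π →
      derivWithin (fun t => psiFun t + η ε t) (Icc 0 π) θ = G (ε, θ) := by
    intro ε θ hθ
    exact (hslice ε θ hθ).derivWithin (huI θ hθ)
  have hGpi : ∀ ε : ℝ, G (ε, π) = 0 := by
    intro ε
    rw [← hderiv ε π hπIcc]
    exact hd ε
  -- value of G at ε = 0
  have hG0 : ∀ θ ∈ Icc (0:ℝ) π, G (0, θ) = (1 / (8 * π)) * Real.cos (θ / 2) := by
    intro θ hθ
    have h1 : HasDerivWithinAt psiFun (G (0, θ)) (Icc 0 π) θ :=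
      (hslice 0 θ hθ).congr (fun t ht => by simp [hF_def, hη0 t ht])
        (by simp [hF_def, hη0 θ hθ])
    have h2 := (psiFun_hasDerivAt θ).hasDerivWithinAt (s := Icc 0 π)
    rw [← h1.derivWithin (huI θ hθ)]
    exact h2.derivWithin (huI θ hθ)
  -- H (0, π) < 0
  have hH0 : H (0, π) < 0 := by
    have h1 : HasDerivWithinAt (fun t => (1 / (8 * π)) * Real.cos (t / 2)) (H (0, π))
        (Icc 0 π) π :=
      (hsliceG 0 π hπIcc).congr (fun t ht => (hG0 t ht).symm) (hG0 π hπIcc).symm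
    have h2 := (psiDeriv_hasDerivAt π).hasDerivWithinAt (s := Icc 0 π)
    have heq : H (0, π) = -((1 / (16 * π)) * Real.sin (π / 2)) := by
      rw [← h1.derivWithin (huI π hπIcc)]
      exact h2.derivWithin (huI π hπIcc)
    rw [heq, Real.sin_pi_div_two, mul_one, neg_lt, neg_zero]
    positivity
  -- continuity of H at (0, π): get δ₂
  have h0π : ((0:ℝ), π) ∈ s := ⟨mem_univ _, hπIcc⟩
  have hHc := hHcont _ h0π
  rw [Metric.continuousWithinAt_iff] at hHc
  obtain ⟨δ₂, hδ₂pos, hδ₂⟩ := hHc (-H (0, π)) (by linarith)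
  -- the cutoff point a
  obtain ⟨a, ha0, haπ, hadist⟩ : ∃ a : ℝ, 0 ≤ a ∧ a < π ∧ π - a < δ₂ := by
    have h1 : 0 < min δ₂ π := lt_min hδ₂pos pi_pos
    have h2 : min δ₂ π ≤ π := min_le_right _ _
    have h3 : min δ₂ π ≤ δ₂ := min_le_left _ _
    exact ⟨π - min δ₂ π / 2, by linarith, by linarith, by linarith⟩
  -- H (ε, x) < 0 near (0, π)
  have hHneg : ∀ ε x : ℝ, |ε| < δ₂ → x ∈ Icc a π → H (ε, x) < 0 := by
    intro ε x hε hx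
    have hxI : x ∈ Icc (0:ℝ) π := ⟨le_trans ha0 hx.1, hx.2⟩
    have hmem : (ε, x) ∈ s := ⟨mem_univ _, hxI⟩
    have hdist : dist ((ε, x) : ℝ × ℝ) (0, π) < δ₂ := by
      rw [Prod.dist_eq]
      apply max_lt
      · simpa [Real.dist_eq] using hε
      · rw [Real.dist_eq, abs_of_nonpos (by linarith [hx.2])]
        have := hx.1
        linarith
    have := hδ₂ hmem hdist
    rw [Real.dist_eq, abs_sub_lt_iff] at this
    linarith [this.1]
  -- minimum of ψ' on [0, a]
  obtain ⟨m, hmpos, hG0m⟩ : ∃ m : ℝ, 0 < m ∧ ∀ θ ∈ Icc (0:ℝ) a, m ≤ G (0, θ) := by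
    refine ⟨(1 / (8 * π)) * Real.cos (a / 2), ?_, ?_⟩
    · apply mul_pos (by positivity)
      apply Real.cos_pos_of_mem_Ioo
      constructor
      · linarith [pi_pos]
      · linarith
    · intro θ hθ
      have hθI : θ ∈ Icc (0:ℝ) π := ⟨hθ.1, le_trans hθ.2 haπ.le⟩
      rw [hG0 θ hθI]
      apply mul_le_mul_of_nonneg_left _ (by positivity)
      have h1 : (0:ℝ) ≤ θ / 2 := by linarith [hθ.1]
      have h2 : a / 2 ≤ π := by linarith [pi_pos]
      have hθ2 : θ ≤ a := hθ.2
      have h3 : θ / 2 ≤ a / 2 := by linarith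
      exact Real.cos_le_cos_of_nonneg_of_le_pi h1 h2 h3
  -- uniform continuity of G on a compact set: get δ₃
  have hK : IsCompact (Icc (0:ℝ) 1 ×ˢ Icc (0:ℝ) π) := isCompact_Icc.prod isCompact_Icc
  have hKs : (Icc (0:ℝ) 1 ×ˢ Icc (0:ℝ) π) ⊆ s := fun p hp => ⟨mem_univ _, hp.2⟩
  have hGuc := hK.uniformContinuousOn_of_continuous (hG.continuousOn.mono hKs)
  rw [Metric.uniformContinuousOn_iff] at hGuc
  obtain ⟨δ₃, hδ₃pos, hδ₃⟩ := hGuc m hmpos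
  -- final ε₀
  refine ⟨min (min δ₂ δ₃) 1, lt_min (lt_min hδ₂pos hδ₃pos) one_pos, ?_⟩
  intro ε hε0 hεε₀
  have hεδ₂ : ε < δ₂ := lt_of_lt_of_le hεε₀ (le_trans (min_le_left _ _) (min_le_left _ _))
  have hεδ₃ : ε < δ₃ := lt_of_lt_of_le hεε₀ (le_trans (min_le_left _ _) (min_le_right _ _))
  have hε1 : ε ≤ 1 := le_of_lt (lt_of_lt_of_le hεε₀ (min_le_right _ _))
  -- key positivity claim for G
  have key : ∀ θ ∈ Ico (0:ℝ) π, 0 < G (ε, θ) := by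
    intro θ hθ
    have hθI : θ ∈ Icc (0:ℝ) π := ⟨hθ.1, hθ.2.le⟩
    rcases le_or_gt θ a with hcase | hcase
    · -- away from π : uniform continuity
      have hp : ((ε, θ) : ℝ × ℝ) ∈ Icc (0:ℝ) 1 ×ˢ Icc (0:ℝ) π := ⟨⟨hε0.le, hε1⟩, hθI⟩
      have hq : ((0:ℝ), θ) ∈ Icc (0:ℝ) 1 ×ˢ Icc (0:ℝ) π := ⟨⟨le_refl 0, zero_le_one⟩, hθI⟩
      have hdist : dist ((ε, θ) : ℝ × ℝ) (0, θ) < δ₃ := by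
        have : dist ((ε, θ) : ℝ × ℝ) (0, θ) = |ε| := by
          simp [Prod.dist_eq, Real.dist_eq]
        rw [this, abs_of_pos hε0]; exact hεδ₃
      have := hδ₃ _ hp _ hq hdist
      rw [Real.dist_eq, abs_sub_lt_iff] at this
      have := hG0m θ ⟨hθ.1, hcase⟩
      linarith [this]
    · -- close to π : strict antitonicity from H < 0
      have hanti : StrictAntiOn (fun t => G (ε, t)) (Icc a π) := by
        apply strictAntiOn_of_deriv_neg (convex_Icc a π)
        · apply hG.continuousOn.comp (Continuous.continuousOn (continuous_const.prodMk continuous_id))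
          intro t ht
          exact ⟨mem_univ _, ⟨le_trans ha0 ht.1, ht.2⟩⟩
        · intro x hx
          rw [interior_Icc] at hx
          have hx0π : x ∈ Icc (0:ℝ) π := ⟨le_trans ha0 hx.1.le, hx.2.le⟩
          have hnhds : Icc (0:ℝ) π ∈ nhds x :=
            Icc_mem_nhds (lt_of_le_of_lt ha0 hx.1) hx.2
          have hda : HasDerivAt (fun t => G (ε, t)) (H (ε, x)) x :=
            (hsliceG ε x hx0π).hasDerivAt hnhds
          rw [hda.deriv]
          exact hHneg ε x (by rw [abs_of_pos hε0]; exact hεδ₂) ⟨hx.1.le, hx.2.le⟩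
      have := hanti ⟨hcase.le, hθ.2.le⟩ (right_mem_Icc.mpr haπ.le) hθ.2
      simpa [hGpi ε] using this
  constructor
  · intro θ hθ
    rw [hderiv ε θ ⟨hθ.1, hθ.2.le⟩]
    exact key θ hθ
  · apply strictMonoOn_of_deriv_pos (convex_Icc 0 π)
    · have : ContinuousOn (fun t => F (ε, t)) (Icc 0 π) := by
        apply hF.continuousOn.comp (Continuous.continuousOn (continuous_const.prodMk continuous_id))
        intro t ht
        exact ⟨mem_univ _, ht⟩
      exact this
    · intro x hx
      rw [interior_Icc] at hx
      have hx0π : x ∈ Icc (0:ℝ) π := ⟨hx.1.le, hx.2.le⟩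
      have hda : HasDerivAt (fun t => F (ε, t)) (G (ε, x)) x :=
        (hslice ε x hx0π).hasDerivAt (Icc_mem_nhds hx.1 hx.2)
      have : deriv (fun t => psiFun t + η ε t) x = G (ε, x) := hda.deriv
      rw [this]
      exact key x ⟨hx.1.le, hx.2⟩
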